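/- arXiv:1404.3793 — 3 statements merged into one kernel-verified Lean document; each statement's English description precedes it below -/
import Mathlib

section
/- A ⋈^f J is a local ring if and only if A is local and J ⊆ Rad(B) (the Jacobson radical of B). -/
variable {A B : Type*} [CommRing A] [CommRing B]

/-- The amalgamation `A ⋈^f J` of `A` and `B` along the ideal `J` with respect to `f`,
as a subring of `A × B`. -/
def amalg (f : A →+* B) (J : Ideal B) : Subring (A × B) where
  carrier := {p | ∃ a, ∃ j ∈ J, p = (a, f a + j)}
  zero_mem' := ⟨0, 0, J.zero_mem, by simp [Prod.ext_iff]⟩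
  one_mem' := ⟨1, 0, J.zero_mem, by simp [Prod.ext_iff]⟩
  add_mem' := by
    rintro _ _ ⟨a, j, hj, rfl⟩ ⟨a', j', hj', rfl⟩
    exact ⟨a + a', j + j', J.add_mem hj hj', by simp [Prod.ext_iff]; ring⟩
  neg_mem' := by
    rintro _ ⟨a, j, hj, rfl⟩
    exact ⟨-a, -j, J.neg_mem hj, by simp [Prod.ext_iff]; ring⟩
  mul_mem' := by
    rintro _ _ ⟨a, j, hj, rfl⟩ ⟨a', j', hj', rfl⟩
    exact ⟨a * a', f a * j' + j * f a' + j * j',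
      J.add_mem (J.add_mem (J.mul_mem_left _ hj') (J.mul_mem_right _ hj)) (J.mul_mem_right _ hj),
      by simp [Prod.ext_iff]; ring⟩

/-- The set of zero-divisors of a ring. -/
def zdSet (R : Type*) [CommRing R] : Set R := {a | ∃ b, b ≠ 0 ∧ a * b = 0}

/-- The content ideal of a polynomial: the ideal generated by its coefficients. -/
def contentIdeal {R : Type*} [CommRing R] (p : Polynomial R) : Ideal R :=
  Ideal.span (Set.range p.coeff)

/-- A polynomial is Gaussian if `c(ph) = c(p) c(h)` for every polynomial `h`. -/
def IsGaussianPoly {R : Type*} [CommRing R] (p : Polynomial R) : Prop :=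
  ∀ h : Polynomial R, contentIdeal (p * h) = contentIdeal p * contentIdeal h

/-- A Gaussian ring. -/
def IsGaussianRing (R : Type*) [CommRing R] : Prop :=
  ∀ p q : Polynomial R, contentIdeal (p * q) = contentIdeal p * contentIdeal q

/-- A Prüfer ring: every finitely generated regular ideal is invertible
(in the total ring of quotients). -/
def IsPruferRing (R : Type*) [CommRing R] : Prop :=
  ∀ I : Ideal R, I.FG → (∃ r ∈ I, r ∈ nonZeroDivisors R) →
    ∃ T : FractionalIdeal (nonZeroDivisors R) (FractionRing R),
      (I : FractionalIdeal (nonZeroDivisors R) (FractionRing R)) * T = 1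


lemma amalg_isUnit_of_fst {f : A →+* B} {J : Ideal B} (hJac : J ≤ (⊥ : Ideal B).jacobson)
    (x : amalg f J) (ha : IsUnit (x : A × B).1) : IsUnit x := by
  obtain ⟨a, j, hj, hx⟩ := x.2
  obtain ⟨b, hb⟩ := ha.exists_right_inv
  rw [hx] at hb
  have hb' : a * b = 1 := hb
  -- f a + j is a unit
  have hu : IsUnit ((x : A × B).2) := by
    rw [hx]
    have h1 : IsUnit (j * f b + 1) := Ideal.mem_jacobson_bot.1 (hJac hj) (f b)
    have h2 : IsUnit (f a) := IsUnit.map f ⟨⟨a, b, hb', by rw [mul_comm] at hb'; exact hb'⟩, rfl⟩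
    have hab : f a * f b = 1 := by rw [← f.map_mul, hb', f.map_one]
    have : f a + j = f a * (j * f b + 1) := by linear_combination -j * hab
    rw [this]
    exact h2.mul h1
  obtain ⟨v, hv⟩ := hu.exists_right_inv
  rw [hx] at hv
  -- the inverse (b, v) lies in the amalgamation
  have hmem : ((b, v) : A × B) ∈ amalg f J := by
    refine ⟨b, v - f b, ?_, by simp⟩
    have hab : f a * f b = 1 := by rw [← f.map_mul, hb', f.map_one]
    have key : (f a + j) * (v - f b) = -(j * f b) := by linear_combination hv - hab
    have : v - f b = v * -(j * f b) := by
      calc v - f b = (v * ((f a + j) * (v - f b))) := by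
            rw [← mul_assoc, mul_comm v, hv, one_mul]
        _ = v * -(j * f b) := by rw [key]
    rw [this]
    exact J.mul_mem_left _ (J.neg_mem (J.mul_mem_right _ hj))
  refine IsUnit.of_mul_eq_one (a := x) ⟨(b, v), hmem⟩ ?_
  ext
  · show ((x : A × B) * (b, v)).1 = 1
    rw [hx]; exact hb'
  · show ((x : A × B) * (b, v)).2 = 1
    rw [hx]; exact hv

/-- `A ⋈^f J` is local iff `A` is local and `J ⊆ Rad(B)`. -/
theorem amalg_isLocalRing_iff (f : A →+* B) (J : Ideal B) (hJ : J ≠ ⊤) :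
    IsLocalRing ↥(amalg f J) ↔ IsLocalRing A ∧ J ≤ (⊥ : Ideal B).jacobson := by
  have hBA : ∀ {x : A}, x = 0 → x = 1 → False := by
    intro x h0 h1
    apply hJ
    rw [Ideal.eq_top_iff_one]
    have : (1 : B) = 0 := by rw [← f.map_one, ← h1, h0, f.map_zero]
    rw [this]; exact J.zero_mem
  have hA : Nontrivial A := ⟨0, 1, fun h => hBA rfl h⟩
  constructor
  · intro h
    constructor
    · refine IsLocalRing.of_surjective' ((RingHom.fst A B).comp (amalg f J).subtype) ?_
      intro a
      exact ⟨⟨(a, f a + 0), a, 0, J.zero_mem, rfl⟩, by simp⟩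
    · intro j hj
      rw [Ideal.mem_jacobson_bot]
      intro y
      have hmem : ((1, 1 + j * y) : A × B) ∈ amalg f J :=
        ⟨1, j * y, J.mul_mem_right _ hj, by simp⟩
      rcases IsLocalRing.isUnit_or_isUnit_one_sub_self (⟨_, hmem⟩ : amalg f J) with hu | hu
      · have := hu.map ((RingHom.snd A B).comp (amalg f J).subtype)
        simpa [add_comm, mul_comm] using this
      · exfalso
        have := hu.map ((RingHom.fst A B).comp (amalg f J).subtype)
        simp at this
  · rintro ⟨hA', hJac⟩
    have : Nontrivial ↥(amalg f J) := by
      refine ⟨0, 1, fun h => ?_⟩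
      have : ((0 : A × B)).1 = ((1 : A × B)).1 := by
        rw [← Subring.coe_zero (amalg f J), ← Subring.coe_one (amalg f J), h]
      exact zero_ne_one (α := A) this
    apply IsLocalRing.of_isUnit_or_isUnit_one_sub_self
    intro x
    rcases IsLocalRing.isUnit_or_isUnit_one_sub_self ((x : A × B).1) with ha | ha
    · exact Or.inl (amalg_isUnit_of_fst hJac x ha)
    · exact Or.inr (amalg_isUnit_of_fst hJac (1 - x) ha)
end

section
/- The maximal ideals of A ⋈^f J are exactly the ideals m ⋈^f J := {(a, f(a)+j) : a ∈ m, j ∈ J} for m a maximal ideal of A, together with the ideals Q̄^f := {(a, f(a)+j) : a ∈ A, j ∈ J, f(a)+j ∈ Q} for Q a maximal ideal of B not containing J. -/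
variable {A B : Type*} [CommRing A] [CommRing B]

/-- The projection `A ⋈^f J → A`. -/
def pFst (f : A →+* B) (J : Ideal B) : ↥(amalg f J) →+* A :=
  (RingHom.fst A B).comp (amalg f J).subtype

/-- The projection `A ⋈^f J → B`. -/
def pSnd (f : A →+* B) (J : Ideal B) : ↥(amalg f J) →+* B :=
  (RingHom.snd A B).comp (amalg f J).subtype

section aux
variable (f : A →+* B) (J : Ideal B)

lemma amalg_mem0 (b : B) (hb : b ∈ J) : ((0 : A), b) ∈ amalg f J :=
  ⟨0, b, hb, by simp⟩

lemma pFst_surjective : Function.Surjective (pFst f J) :=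
  fun a => ⟨⟨(a, f a), a, 0, J.zero_mem, by simp⟩, rfl⟩

lemma pFst_apply (x : ↥(amalg f J)) : pFst f J x = x.val.1 := rfl
lemma pSnd_apply (x : ↥(amalg f J)) : pSnd f J x = x.val.2 := rfl

lemma amalg_mem_congr {M : Ideal ↥(amalg f J)} {x y : ↥(amalg f J)} (h : x.val = y.val) :
    x ∈ M → y ∈ M := by
  cases x; cases y; cases h; exact id

lemma comap_pSnd_isMaximal (Q : Ideal B) (hQ : Q.IsMaximal) (hJQ : ¬ J ≤ Q) :
    (Q.comap (pSnd f J)).IsMaximal := by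
  have hsup : Q ⊔ J = ⊤ := by
    by_contra hne
    exact hJQ ((hQ.eq_of_le hne le_sup_left) ▸ le_sup_right)
  set π := (Ideal.Quotient.mk Q).comp (pSnd f J) with hπ
  have hsurj : Function.Surjective π := by
    intro y
    obtain ⟨b, rfl⟩ := Ideal.Quotient.mk_surjective y
    obtain ⟨q, hq, j, hj, hqj⟩ := Submodule.mem_sup.mp (hsup ▸ Submodule.mem_top : (1:B) ∈ Q ⊔ J)
    refine ⟨⟨((0:A), b * j), amalg_mem0 f J _ (J.mul_mem_left b hj)⟩, ?_⟩
    show Ideal.Quotient.mk Q (b * j) = Ideal.Quotient.mk Q b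
    rw [Ideal.Quotient.eq]
    have : b * j - b = -(b * q) := by linear_combination b * hqj
    rw [this]
    exact Q.neg_mem (Q.mul_mem_left b hq)
  haveI := hQ
  letI := Ideal.Quotient.field Q
  have : (Ideal.comap π ⊥).IsMaximal :=
    Ideal.comap_isMaximal_of_surjective π hsurj (K := ⊥) (H := Ideal.bot_isMaximal)
  rwa [hπ, ← Ideal.comap_comap, ← RingHom.ker_eq_comap_bot, Ideal.mk_ker] at this

end aux

/-- The maximal ideals of `A ⋈^f J` are the `m ⋈^f J` for `m` maximal in `A`, together with the
`Q̄^f` for `Q` maximal in `B` not containing `J`. -/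
theorem amalg_maximal_ideals (f : A →+* B) (J : Ideal B) (hJ : J ≠ ⊤)
    (M : Ideal ↥(amalg f J)) :
    M.IsMaximal ↔
      (∃ m : Ideal A, m.IsMaximal ∧ M = m.comap (pFst f J)) ∨
      (∃ Q : Ideal B, Q.IsMaximal ∧ ¬ J ≤ Q ∧ M = Q.comap (pSnd f J)) := by
  constructor
  · intro hM
    have hMcm : Ideal.comap (pFst f J) (Ideal.map (pFst f J) M) = M ⊔ RingHom.ker (pFst f J) := by
      rw [Ideal.comap_map_of_surjective _ (pFst_surjective f J) M, RingHom.ker_eq_comap_bot]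
    by_cases hker : RingHom.ker (pFst f J) ≤ M
    · left
      refine ⟨M.map (pFst f J), ?_, ?_⟩
      · rcases Ideal.map_eq_top_or_isMaximal_of_surjective _ (pFst_surjective f J) hM with h | h
        · exfalso
          apply hM.ne_top
          have := hMcm
          rw [h, Ideal.comap_top, sup_eq_left.mpr hker] at this
          exact this.symm
        · exact h
      · rw [hMcm, sup_eq_left.mpr hker]
    · right
      obtain ⟨x, hxk, hxM⟩ := SetLike.not_le_iff_exists.mp hker
      have hx1 : x.val.1 = 0 := hxk
      have hxJ : x.val.2 ∈ J := by
        obtain ⟨a, j, hj, hx⟩ := x.2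
        have : a = x.val.1 := by rw [hx]
        rw [hx]
        simpa [this, hx1] using hj
      -- the candidate maximal ideal of B
      let Q : Ideal B :=
      { carrier := {b | ∀ j, ∀ hj : j ∈ J,
          (⟨((0:A), j * b), amalg_mem0 f J _ (J.mul_mem_right b hj)⟩ : ↥(amalg f J)) ∈ M}
        zero_mem' := by
          intro j hj
          exact amalg_mem_congr f J (by simp [Prod.ext_iff]) M.zero_mem
        add_mem' := by
          intro a b ha hb j hj
          exact amalg_mem_congr f J (x := _ + _) (by simp [Prod.ext_iff]; ring)
            (M.add_mem (ha j hj) (hb j hj))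
        smul_mem' := by
          intro c b hb j hj
          exact amalg_mem_congr f J (by simp [Prod.ext_iff, mul_assoc])
            (hb (j * c) (J.mul_mem_right c hj)) }
      have hmemQ : ∀ b : B, b ∈ Q ↔ ∀ j, ∀ hj : j ∈ J,
          (⟨((0:A), j * b), amalg_mem0 f J _ (J.mul_mem_right b hj)⟩ : ↥(amalg f J)) ∈ M :=
        fun _ => Iff.rfl
      have hj₀Q : x.val.2 ∉ Q := by
        intro h
        have hx2 : x * x ∈ M := amalg_mem_congr f J (by simp [Prod.ext_iff, hx1]) (h _ hxJ)
        exact hxM ((hM.isPrime.mem_or_mem hx2).elim id id)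
      have hMQ : M = Q.comap (pSnd f J) := by
        ext y
        constructor
        · intro hy j hj
          exact amalg_mem_congr f J (x := (⟨((0:A), j), amalg_mem0 f J j hj⟩ : ↥(amalg f J)) * y)
            (by simp [Prod.ext_iff, pSnd_apply]) (M.mul_mem_left _ hy)
        · intro hy
          have hxy : x * y ∈ M :=
            amalg_mem_congr f J (by simp [Prod.ext_iff, hx1, pSnd_apply]) (hy x.val.2 hxJ)
          exact (hM.isPrime.mem_or_mem hxy).resolve_left hxM
      have hQtop : Q ≠ ⊤ := fun h => hj₀Q (h ▸ Submodule.mem_top)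
      refine ⟨Q, ⟨hQtop, ?_⟩, fun h => hj₀Q (h hxJ), hMQ⟩
      intro Q' hQ'
      by_contra h1
      have h1' : (1 : B) ∉ Q' := fun h => h1 ((Ideal.eq_top_iff_one Q').mpr h)
      have hcne : Q'.comap (pSnd f J) ≠ ⊤ := by
        intro h
        exact h1' (by simpa [pSnd_apply] using (Ideal.eq_top_iff_one _).mp h)
      have hcM : Q'.comap (pSnd f J) = M :=
        (hM.eq_of_le hcne (hMQ ▸ Ideal.comap_mono hQ'.le)).symm
      obtain ⟨b, hbQ', hbQ⟩ := SetLike.exists_of_lt hQ'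
      rw [hmemQ] at hbQ
      push_neg at hbQ
      obtain ⟨j, hj, hjb⟩ := hbQ
      apply hjb
      rw [← hcM]
      exact Q'.mul_mem_left j hbQ'
  · rintro (⟨m, hm, rfl⟩ | ⟨Q, hQ, hJQ, rfl⟩)
    · haveI := hm
      exact Ideal.comap_isMaximal_of_surjective _ (pFst_surjective f J)
    · exact comap_pSnd_isMaximal f J Q hQ hJQ
end

section
/- Let (A,m) be local and I a proper ideal of A. Then the amalgamated duplication A ⋈ I := {(a, a+i) : a ∈ A, i ∈ I} is a Prüfer ring if and only if A is a Prüfer ring and I = aI for all a ∈ m \ Z(A). -/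
variable {A B : Type*} [CommRing A] [CommRing B]

open FractionalIdeal in
lemma prufer_of_principal {R : Type*} [CommRing R]
    (h : ∀ J : Ideal R, J.FG → (∃ r ∈ J, r ∈ nonZeroDivisors R) →
      ∃ g ∈ nonZeroDivisors R, J = Ideal.span {g}) : IsPruferRing R := by
  intro J hfg hreg
  obtain ⟨g, hg, rfl⟩ := h J hfg hreg
  have hu : IsUnit (algebraMap R (FractionRing R) g) :=
    IsLocalization.map_units (FractionRing R) (⟨g, hg⟩ : nonZeroDivisors R)
  refine ⟨spanSingleton _ ((hu.unit⁻¹ : _) : FractionRing R), ?_⟩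
  rw [coeIdeal_span_singleton, spanSingleton_mul_spanSingleton]
  rw [hu.mul_val_inv]
  exact spanSingleton_one

open FractionalIdeal in
lemma principal_of_prufer {R : Type*} [CommRing R] [IsLocalRing R] (hP : IsPruferRing R)
    (J : Ideal R) (hfg : J.FG) (r : R) (hrJ : r ∈ J) (hr : r ∈ nonZeroDivisors R) :
    ∃ g ∈ J, g ∈ nonZeroDivisors R ∧ J = Ideal.span {g} := by
  obtain ⟨T, hT⟩ := hP J hfg ⟨r, hrJ, hr⟩
  set K := FractionRing R
  set S : Set R := {s : R | ∃ x ∈ J, ∃ t ∈ T, algebraMap R K s = algebraMap R K x * t} with hS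
  -- 1 ∈ span S
  have inj : Function.Injective (algebraMap R K) := IsFractionRing.injective R K
  have key : ∀ z (hz : z ∈ ((J : FractionalIdeal (nonZeroDivisors R) K) : Submodule R K) *
      (T : Submodule R K)), ∀ s : R, algebraMap R K s = z → s ∈ Ideal.span S := by
    intro z hz
    refine Submodule.mul_induction_on' (C := fun z _ => ∀ s : R, algebraMap R K s = z →
        s ∈ Ideal.span S) ?_ ?_ hz
    · intro m hm t ht s hs
      rw [mem_coe, mem_coeIdeal] at hm
      obtain ⟨x, hxJ, rfl⟩ := hm
      exact Ideal.subset_span ⟨x, hxJ, t, mem_coe.mp ht, hs⟩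
    · intro z₁ hz₁ z₂ hz₂ ih₁ ih₂ s hs
      have h1 : z₁ ∈ (1 : FractionalIdeal (nonZeroDivisors R) K) := by
        rw [← hT]; rw [← mem_coe, coe_mul]; exact hz₁
      have h2 : z₂ ∈ (1 : FractionalIdeal (nonZeroDivisors R) K) := by
        rw [← hT]; rw [← mem_coe, coe_mul]; exact hz₂
      obtain ⟨s₁, hs₁⟩ := (mem_one_iff _).mp h1
      obtain ⟨s₂, hs₂⟩ := (mem_one_iff _).mp h2
      have : s = s₁ + s₂ := inj (by rw [RingHom.map_add, hs₁, hs₂, hs])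
      subst this
      exact Ideal.add_mem _ (ih₁ s₁ hs₁) (ih₂ s₂ hs₂)
  have one_mem : (1 : R) ∈ Ideal.span S := by
    refine key 1 ?_ 1 (map_one _)
    rw [← coe_mul, hT, coe_one]
    exact Submodule.one_le.mp le_rfl
  -- some element of S is a unit
  have exS : ∃ s ∈ S, IsUnit s := by
    by_contra hcon
    push_neg at hcon
    have hle : Ideal.span S ≤ IsLocalRing.maximalIdeal R := by
      rw [Ideal.span_le]
      intro s hs
      exact (IsLocalRing.mem_maximalIdeal _).mpr (hcon s hs)
    exact (IsLocalRing.maximalIdeal.isMaximal R).ne_top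
      (Ideal.eq_top_of_isUnit_mem _ (hle one_mem) isUnit_one)
  obtain ⟨s, ⟨x, hxJ, t, htT, hst⟩, hsu⟩ := exS
  have hspan : J = Ideal.span {x} := by
    apply le_antisymm
    · intro y hy
      have hmem : algebraMap R K y * t ∈ (J : FractionalIdeal (nonZeroDivisors R) K) * T :=
        mul_mem_mul ((mem_coeIdeal _).mpr ⟨y, hy, rfl⟩) htT
      rw [hT] at hmem
      obtain ⟨w, hw⟩ := (mem_one_iff _).mp hmem
      have hsy : s * y = x * w := inj (by
        rw [RingHom.map_mul, RingHom.map_mul, hst, hw]; ring)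
      have hv : (↑hsu.unit⁻¹ : R) * s = 1 := hsu.val_inv_mul
      exact Ideal.mem_span_singleton'.mpr ⟨(↑hsu.unit⁻¹ : R) * w, by linear_combination y * hv - (↑hsu.unit⁻¹ : R) * hsy⟩
    · rw [Ideal.span_le, Set.singleton_subset_iff]; exact hxJ
  refine ⟨x, hxJ, ?_, hspan⟩
  rw [mem_nonZeroDivisors_iff_right]
  intro b hb
  obtain ⟨c, hc⟩ := Ideal.mem_span_singleton'.mp (hspan ▸ hrJ)
  exact (mem_nonZeroDivisors_iff_right.mp hr) b (by linear_combination c * hb - b * hc)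

lemma mem_amalg_iff (I : Ideal A) {p : A × A} :
    p ∈ amalg (RingHom.id A) I ↔ p.2 - p.1 ∈ I := by
  constructor
  · rintro ⟨a, j, hj, rfl⟩; simpa using hj
  · intro h
    exact ⟨p.1, p.2 - p.1, h, by simp⟩

/-- The diagonal embedding into the duplication. -/
def diag (I : Ideal A) : A →+* ↥(amalg (RingHom.id A) I) where
  toFun a := ⟨(a, a), (mem_amalg_iff I).mpr (by simp)⟩
  map_one' := rfl
  map_mul' a b := by ext <;> rfl
  map_zero' := rfl
  map_add' a b := by ext <;> rfl

/-- First projection from the duplication. -/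
def pr1 (I : Ideal A) : ↥(amalg (RingHom.id A) I) →+* A :=
  (RingHom.fst A A).comp (amalg (RingHom.id A) I).subtype

lemma pr1_surjective (I : Ideal A) : Function.Surjective (pr1 I) :=
  fun a => ⟨diag I a, rfl⟩

lemma pr1_comp_diag (I : Ideal A) : (pr1 I).comp (diag I) = RingHom.id A :=
  RingHom.ext fun _ => rfl

lemma amalg_unit [IsLocalRing A] {I : Ideal A} (hI : I ≠ ⊤)
    {x : ↥(amalg (RingHom.id A) I)} (h : IsUnit x.val.1) : IsUnit x := by
  have hIm : I ≤ IsLocalRing.maximalIdeal A := IsLocalRing.le_maximalIdeal hI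
  have hk : x.val.2 - x.val.1 ∈ I := (mem_amalg_iff I).mp x.2
  have hb : IsUnit x.val.2 := by
    by_contra hb
    have : x.val.2 ∈ IsLocalRing.maximalIdeal A := (IsLocalRing.mem_maximalIdeal _).mpr hb
    have : x.val.1 ∈ IsLocalRing.maximalIdeal A := by
      have := Ideal.sub_mem _ this (hIm hk)
      simpa using this
    exact (IsLocalRing.mem_maximalIdeal _).mp this h
  have ha1 : x.val.1 * ↑h.unit⁻¹ = 1 := h.mul_val_inv
  have hb1 : x.val.2 * ↑hb.unit⁻¹ = 1 := hb.mul_val_inv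
  have hmem : ((↑h.unit⁻¹, ↑hb.unit⁻¹) : A × A) ∈ amalg (RingHom.id A) I := by
    rw [mem_amalg_iff I]
    have : (↑hb.unit⁻¹ - ↑h.unit⁻¹ : A) =
        (↑h.unit⁻¹ * ↑hb.unit⁻¹ : A) * (-(x.val.2 - x.val.1)) := by
      linear_combination (↑h.unit⁻¹ : A) * hb1 - (↑hb.unit⁻¹ : A) * ha1
    rw [this]
    exact I.mul_mem_left _ (I.neg_mem hk)
  refine ⟨⟨x, ⟨_, hmem⟩, ?_, ?_⟩, rfl⟩
  · exact Subtype.ext (Prod.ext ha1 hb1)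
  · exact Subtype.ext (Prod.ext (by rw [mul_comm] at ha1; exact ha1)
      (by rw [mul_comm] at hb1; exact hb1))

lemma amalg_nzd_of_coords {I : Ideal A} {x : ↥(amalg (RingHom.id A) I)}
    (h1 : x.val.1 ∈ nonZeroDivisors A) (h2 : x.val.2 ∈ nonZeroDivisors A) :
    x ∈ nonZeroDivisors ↥(amalg (RingHom.id A) I) := by
  rw [mem_nonZeroDivisors_iff_right]
  intro z hz
  have hv : z.val * x.val = 0 := by
    have := congrArg Subtype.val hz
    simpa using this
  have hv1 : z.val.1 * x.val.1 = 0 := congrArg Prod.fst hv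
  have hv2 : z.val.2 * x.val.2 = 0 := congrArg Prod.snd hv
  exact Subtype.ext (Prod.ext ((mem_nonZeroDivisors_iff_right.mp h1) _ hv1) ((mem_nonZeroDivisors_iff_right.mp h2) _ hv2))

lemma amalg_fst_nzd {I : Ideal A} {x : ↥(amalg (RingHom.id A) I)}
    (hx : x ∈ nonZeroDivisors ↥(amalg (RingHom.id A) I)) :
    x.val.1 ∈ nonZeroDivisors A := by
  have hk : x.val.2 - x.val.1 ∈ I := (mem_amalg_iff I).mp x.2
  rw [mem_nonZeroDivisors_iff_right]
  intro b hb
  -- first: (x.val.2 - x.val.1) * b = 0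
  have hmem2 : (((x.val.2 - x.val.1) * b, 0) : A × A) ∈ amalg (RingHom.id A) I := by
    rw [mem_amalg_iff I]
    simpa using I.neg_mem (I.mul_mem_right b hk)
  have hz2 : (⟨_, hmem2⟩ : ↥(amalg (RingHom.id A) I)) * x = 0 := by
    refine Subtype.ext (Prod.ext ?_ ?_)
    · show (x.val.2 - x.val.1) * b * x.val.1 = 0
      linear_combination (x.val.2 - x.val.1) * hb
    · show 0 * x.val.2 = 0
      ring
  have hkb : (x.val.2 - x.val.1) * b = 0 := by
    have := (mem_nonZeroDivisors_iff_right.mp hx) _ hz2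
    exact congrArg (fun w => (Subtype.val w).1) this
  have hmem1 : ((b, b) : A × A) ∈ amalg (RingHom.id A) I := by
    rw [mem_amalg_iff I]; simpa using I.zero_mem
  have hz1 : (⟨_, hmem1⟩ : ↥(amalg (RingHom.id A) I)) * x = 0 := by
    refine Subtype.ext (Prod.ext ?_ ?_)
    · show b * x.val.1 = 0
      exact hb
    · show b * x.val.2 = 0
      linear_combination hb + hkb
  have := (mem_nonZeroDivisors_iff_right.mp hx) _ hz1
  exact congrArg (fun w => (Subtype.val w).1) this

lemma amalg_local [IsLocalRing A] {I : Ideal A} (hI : I ≠ ⊤) :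
    IsLocalRing ↥(amalg (RingHom.id A) I) := by
  haveI : Nontrivial ↥(amalg (RingHom.id A) I) :=
    ⟨0, 1, fun h => zero_ne_one (α := A) (congrArg (fun w => (Subtype.val w).1) h)⟩
  apply IsLocalRing.of_isUnit_or_isUnit_one_sub_self
  intro x
  rcases IsLocalRing.isUnit_or_isUnit_one_sub_self x.val.1 with h | h
  · exact Or.inl (amalg_unit hI h)
  · refine Or.inr (amalg_unit hI ?_)
    have : (1 - x).val.1 = 1 - x.val.1 := rfl
    rw [this]
    exact h

/-- The amalgamated duplication `A ⋈ I` is Prüfer iff `A` is Prüfer and `I = aI` for all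
`a ∈ m \ Z(A)`. -/
theorem duplication_prufer_iff [IsLocalRing A] (I : Ideal A) (hI : I ≠ ⊤) :
    IsPruferRing ↥(amalg (RingHom.id A) I) ↔
      IsPruferRing A ∧
        ∀ a ∈ IsLocalRing.maximalIdeal A, a ∉ zdSet A → I = Ideal.span {a} * I := by
  haveI hloc : IsLocalRing ↥(amalg (RingHom.id A) I) := amalg_local hI
  have hIm : I ≤ IsLocalRing.maximalIdeal A := IsLocalRing.le_maximalIdeal hI
  constructor
  · intro hD
    constructor
    · -- A is Prüfer
      apply prufer_of_principal
      rintro J hfg ⟨r, hrJ, hr⟩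
      have hrD : diag I r ∈ nonZeroDivisors ↥(amalg (RingHom.id A) I) :=
        amalg_nzd_of_coords hr hr
      obtain ⟨x, hxJ', hxreg, hxspan⟩ := principal_of_prufer hD (J.map (diag I))
        (hfg.map _) _ (Ideal.mem_map_of_mem _ hrJ) hrD
      have hJ : J = Ideal.span {x.val.1} := by
        have h1 : J = (J.map (diag I)).map (pr1 I) := by
          rw [Ideal.map_map, pr1_comp_diag, Ideal.map_id]
        rw [h1, hxspan, Ideal.map_span, Set.image_singleton]
        rfl
      refine ⟨x.val.1, ?_, hJ⟩
      obtain ⟨c, hc⟩ := Ideal.mem_span_singleton'.mp (hJ ▸ hrJ)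
      rw [mem_nonZeroDivisors_iff_right]
      intro b hb
      exact (mem_nonZeroDivisors_iff_right.mp hr) b (by linear_combination c * hb - b * hc)
    · -- I = aI for regular a in m
      intro a ham hazd
      have hareg : a ∈ nonZeroDivisors A := by
        rw [mem_nonZeroDivisors_iff_right]
        intro b hb
        by_contra hb0
        exact hazd ⟨b, hb0, by linear_combination hb⟩
      refine le_antisymm ?_ Ideal.mul_le_right
      intro i hiI
      have hzm : ((0, i) : A × A) ∈ amalg (RingHom.id A) I := by
        rw [mem_amalg_iff I]; simpa using hiI
      set z : ↥(amalg (RingHom.id A) I) := ⟨(0, i), hzm⟩ with hzdef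
      set xa := diag I a with hxadef
      have hxaJ : xa ∈ Ideal.span {xa, z} := Ideal.subset_span (by simp)
      have hzJ : z ∈ Ideal.span {xa, z} := Ideal.subset_span (by simp)
      have hfg : (Ideal.span {xa, z}).FG := Submodule.fg_span (Set.toFinite _)
      obtain ⟨x, hxJ', hxreg, hxspan⟩ := principal_of_prufer hD _ hfg xa hxaJ
        (amalg_nzd_of_coords hareg hareg)
      obtain ⟨Bc, hB⟩ := Ideal.mem_span_singleton'.mp (hxspan ▸ hxaJ)
      obtain ⟨Cc, hC⟩ := Ideal.mem_span_singleton'.mp (hxspan ▸ hzJ)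
      have hxmem : x ∈ Ideal.span {xa, z} := by rw [hxspan]; exact Ideal.mem_span_singleton_self x
      obtain ⟨P, Q, hPQ⟩ := Ideal.mem_span_pair.mp hxmem
      -- coordinates
      have hB1 : Bc.val.1 * x.val.1 = a := congrArg (fun w => (Subtype.val w).1) hB
      have hB2 : Bc.val.2 * x.val.2 = a := congrArg (fun w => (Subtype.val w).2) hB
      have hC1 : Cc.val.1 * x.val.1 = 0 := congrArg (fun w => (Subtype.val w).1) hC
      have hC2 : Cc.val.2 * x.val.2 = i := congrArg (fun w => (Subtype.val w).2) hC
      have hP1 : P.val.1 * a + Q.val.1 * 0 = x.val.1 := congrArg (fun w => (Subtype.val w).1) hPQ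
      have hjI : Bc.val.2 - Bc.val.1 ∈ I := (mem_amalg_iff I).mp Bc.2
      have hlI : Cc.val.2 - Cc.val.1 ∈ I := (mem_amalg_iff I).mp Cc.2
      have h5 : x.val.1 = P.val.1 * a := by linear_combination -hP1
      have hsb : P.val.1 * Bc.val.1 = 1 := by
        have h0 := (mem_nonZeroDivisors_iff_right.mp hareg) (P.val.1 * Bc.val.1 - 1) (by linear_combination hB1 - Bc.val.1 * h5)
        linear_combination h0
      have hgreg : ∀ t, t * x.val.1 = 0 → t = 0 := by
        intro t ht
        exact (mem_nonZeroDivisors_iff_right.mp hareg) t (by linear_combination Bc.val.1 * ht - t * hB1)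
      have hc0 : Cc.val.1 = 0 := hgreg _ hC1
      have huU : IsUnit (1 + P.val.1 * (Bc.val.2 - Bc.val.1)) := by
        by_contra hu
        have hum := (IsLocalRing.mem_maximalIdeal _).mpr hu
        have h1m : (1 : A) ∈ IsLocalRing.maximalIdeal A := by
          have := Ideal.sub_mem _ hum
            ((IsLocalRing.maximalIdeal A).mul_mem_left P.val.1 (hIm hjI))
          simpa using this
        exact (Ideal.ne_top_iff_one _).mp (IsLocalRing.maximalIdeal.isMaximal A).ne_top h1m
      have hv : (1 + P.val.1 * (Bc.val.2 - Bc.val.1)) * ↑huU.unit⁻¹ = 1 := huU.mul_val_inv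
      have hE : Bc.val.1 * (x.val.2 - x.val.1) + (Bc.val.2 - Bc.val.1) * P.val.1 * a
          + (Bc.val.2 - Bc.val.1) * (x.val.2 - x.val.1) = 0 := by
        linear_combination hB2 - hB1 - (Bc.val.2 - Bc.val.1) * h5
      have hku : (x.val.2 - x.val.1) * (1 + P.val.1 * (Bc.val.2 - Bc.val.1)) =
          -(a * P.val.1 ^ 2 * (Bc.val.2 - Bc.val.1)) := by
        linear_combination P.val.1 * hE - (x.val.2 - x.val.1) * hsb
      refine Ideal.mem_span_singleton_mul.mpr
        ⟨P.val.1 * (Cc.val.2 - Cc.val.1) -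
          (P.val.1 ^ 2 * (Bc.val.2 - Bc.val.1) * ↑huU.unit⁻¹) * (Cc.val.2 - Cc.val.1),
          I.sub_mem (I.mul_mem_left _ hlI) (I.mul_mem_left _ hlI), ?_⟩
      linear_combination hC2 - (a * P.val.1 -
          a * P.val.1 ^ 2 * (Bc.val.2 - Bc.val.1) * ↑huU.unit⁻¹) * hc0 - Cc.val.2 * h5 -
          Cc.val.2 * (↑huU.unit⁻¹ : A) * hku + (Cc.val.2 * (x.val.2 - x.val.1)) * hv
  · rintro ⟨hA, hIa⟩
    apply prufer_of_principal
    rintro J' hfg' ⟨x₀, hx₀J, hx₀reg⟩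
    have hrreg : x₀.val.1 ∈ nonZeroDivisors A := amalg_fst_nzd hx₀reg
    have hJfg : (J'.map (pr1 I)).FG := hfg'.map _
    obtain ⟨g, hgJ, hgreg, hgspan⟩ := principal_of_prufer hA _ hJfg _
      (Ideal.mem_map_of_mem _ hx₀J) hrreg
    by_cases hgu : IsUnit g
    · obtain ⟨y, hyJ', hy⟩ := (Ideal.mem_map_iff_of_surjective _ (pr1_surjective I)).mp hgJ
      have hy1 : y.val.1 = g := hy
      have hyu : IsUnit y := amalg_unit hI (by rw [hy1]; exact hgu)
      refine ⟨1, (nonZeroDivisors _).one_mem, ?_⟩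
      rw [Ideal.span_singleton_one]
      exact Ideal.eq_top_of_isUnit_mem _ hyJ' hyu
    · have hgm : g ∈ IsLocalRing.maximalIdeal A := (IsLocalRing.mem_maximalIdeal _).mpr hgu
      have hgzd : g ∉ zdSet A := by
        rintro ⟨b, hb0, hgb⟩
        exact hb0 ((mem_nonZeroDivisors_iff_right.mp hgreg) b (by linear_combination hgb))
      have hIg : I = Ideal.span {g} * I := hIa g hgm hgzd
      have decomp : ∀ y : ↥(amalg (RingHom.id A) I), y ∈ J' →
          ∃ d e, e ∈ I ∧ y.val.1 = g * d ∧ y.val.2 = g * (d + e) := by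
        intro y hy
        have h1 : y.val.1 ∈ Ideal.span {g} := by
          rw [← hgspan]; exact Ideal.mem_map_of_mem _ hy
        obtain ⟨d, hd⟩ := Ideal.mem_span_singleton'.mp h1
        have h2 : y.val.2 - y.val.1 ∈ Ideal.span {g} * I := by
          rw [← hIg]; exact (mem_amalg_iff I).mp y.2
        obtain ⟨e, heI, he⟩ := Ideal.mem_span_singleton_mul.mp h2
        exact ⟨d, e, heI, by linear_combination -hd, by linear_combination -hd - he⟩
      have exu : ∃ y ∈ J', ∃ d, IsUnit d ∧ y.val.1 = g * d := by
        by_contra hcon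
        push_neg at hcon
        have hle : J'.map (pr1 I) ≤ Ideal.span {g} * IsLocalRing.maximalIdeal A := by
          rw [Ideal.map_le_iff_le_comap]
          intro y hy
          obtain ⟨d, e, _, hd, _⟩ := decomp y hy
          have hdm : d ∈ IsLocalRing.maximalIdeal A :=
            (IsLocalRing.mem_maximalIdeal _).mpr (fun hu => hcon y hy d hu hd)
          exact Ideal.mem_comap.mpr (Ideal.mem_span_singleton_mul.mpr ⟨d, hdm, hd.symm⟩)
        obtain ⟨t, htm, hgt⟩ := Ideal.mem_span_singleton_mul.mp (hle hgJ)
        have ht1 : t - 1 = 0 := (mem_nonZeroDivisors_iff_right.mp hgreg) _ (by linear_combination hgt)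
        have h1m : (1 : A) ∈ IsLocalRing.maximalIdeal A := by
          have h1t : (1 : A) = t := by linear_combination -ht1
          rw [h1t]; exact htm
        exact (Ideal.ne_top_iff_one _).mp (IsLocalRing.maximalIdeal.isMaximal A).ne_top h1m
      obtain ⟨y, hyJ', d, hdu, hyd⟩ := exu
      have h2 : y.val.2 - y.val.1 ∈ Ideal.span {g} * I := by
        rw [← hIg]; exact (mem_amalg_iff I).mp y.2
      obtain ⟨e, heI, he⟩ := Ideal.mem_span_singleton_mul.mp h2
      have hyym : ((d, d + e) : A × A) ∈ amalg (RingHom.id A) I :=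
        (mem_amalg_iff I).mpr (by simpa using heI)
      have hyyu : IsUnit (⟨(d, d + e), hyym⟩ : ↥(amalg (RingHom.id A) I)) :=
        amalg_unit hI (show IsUnit d from hdu)
      have hfact : y = diag I g * ⟨(d, d + e), hyym⟩ :=
        Subtype.ext (Prod.ext hyd (by show y.val.2 = g * (d + e); linear_combination hyd - he))
      have hdiag : diag I g ∈ J' := by
        have h1 : diag I g = y * ↑hyyu.unit⁻¹ := by
          rw [hfact, mul_assoc]
          rw [hyyu.mul_val_inv, mul_one]
        rw [h1]
        exact Ideal.mul_mem_right _ _ hyJ'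
      refine ⟨diag I g, amalg_nzd_of_coords hgreg hgreg, ?_⟩
      apply le_antisymm
      · intro w hw
        obtain ⟨d', e', he'I, hd', he'⟩ := decomp w hw
        refine Ideal.mem_span_singleton'.mpr
          ⟨⟨(d', d' + e'), (mem_amalg_iff I).mpr (by simpa using he'I)⟩, ?_⟩
        refine Subtype.ext (Prod.ext ?_ ?_)
        · show d' * g = w.val.1
          linear_combination -hd'
        · show (d' + e') * g = w.val.2
          linear_combination -he'
      · rw [Ideal.span_le, Set.singleton_subset_iff]; exact hdiag
end
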